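/- Let N > 2 and let g: ℝ^N → ℝ be a radial C² function, written g(x) = G(|x|), and let w(r) = r^{(N-1)/2}·(1+r^α)^{b/(2α)}·G(r). Then for x ≠ 0, Δg(x) + b·(|x|^{α-1}/(1+|x|^α))·(x/|x|)·∇g(x) equals (w''(r)/w(r) - m(r))·g(x) at r = |x|, where m(r) = (N-1)(N-3)/(4r²) + (b/2)(N-2+α)·r^{α-2}/(1+r^α) + (bα/2)(b/(2α)-1)·(r^{α-1}/(1+r^α))². -/

import Mathlib

open Real

/-- The Euclidean Laplacian of a function on `ℝ^N`. -/
noncomputable def laplacian {N : ℕ} (f : EuclideanSpace ℝ (Fin N) → ℝ)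
    (x : EuclideanSpace ℝ (Fin N)) : ℝ :=
  ∑ i : Fin N, fderiv ℝ (fun y => fderiv ℝ f y (EuclideanSpace.single i 1)) x
    (EuclideanSpace.single i 1)

section aux

theorem radial_fderiv {N : ℕ} (G : ℝ → ℝ) (dG : ℝ → ℝ)
    (g : EuclideanSpace ℝ (Fin N) → ℝ) (hg : ∀ x, g x = G ‖x‖)
    (y : EuclideanSpace ℝ (Fin N)) (hy : y ≠ 0)
    (hGd : HasDerivAt G (dG ‖y‖) ‖y‖) :
    HasFDerivAt g ((dG ‖y‖ / ‖y‖) • innerSL ℝ y) y := by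
  have hny : (0:ℝ) < ‖y‖ := norm_pos_iff.mpr hy
  have h1 : HasFDerivAt (fun z : EuclideanSpace ℝ (Fin N) => ‖z‖^2) (2 • innerSL ℝ y) y :=
    (hasStrictFDerivAt_norm_sq y).hasFDerivAt
  have h2 : HasDerivAt Real.sqrt (1/(2*‖y‖)) (‖y‖^2) := by
    have := Real.hasDerivAt_sqrt (x := ‖y‖^2) (by positivity)
    rwa [Real.sqrt_sq hny.le] at this
  have h3 : HasDerivAt (fun s => G (Real.sqrt s)) (dG ‖y‖ * (1/(2*‖y‖))) (‖y‖^2) := by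
    have := HasDerivAt.comp (‖y‖^2) (by rwa [Real.sqrt_sq hny.le]) h2
    exact this
  have h4 := h3.comp_hasFDerivAt y h1
  have hge : g = fun z : EuclideanSpace ℝ (Fin N) => G (Real.sqrt (‖z‖^2)) := by
    funext z; rw [hg, Real.sqrt_sq (norm_nonneg z)]
  rw [hge]
  refine h4.congr_fderiv ?_
  ext v
  simp only [ContinuousLinearMap.smul_apply, smul_eq_mul]
  field_simp
  ring

theorem sum_coord_sq {N : ℕ} (x : EuclideanSpace ℝ (Fin N)) : ∑ i, x i ^ 2 = ‖x‖ ^ 2 := by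
  rw [EuclideanSpace.norm_sq_eq]; simp [sq_abs]

end aux

set_option maxHeartbeats 2000000 in
theorem stmt_8 (N : ℕ) (hN : 2 < N) (α b : ℝ) (hα : 2 < α)
    (G : ℝ → ℝ) (hG : ContDiffOn ℝ 2 G (Set.Ioi 0)) (hGpos : ∀ r > (0:ℝ), 0 < G r)
    (g : EuclideanSpace ℝ (Fin N) → ℝ) (hg : ∀ x, g x = G ‖x‖)
    (w m : ℝ → ℝ)
    (hw : ∀ r : ℝ, w r = r ^ ((N - 1 : ℝ) / 2) * (1 + r ^ α) ^ (b / (2 * α)) * G r)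
    (hm : ∀ r : ℝ, m r = (N - 1) * (N - 3) / (4 * r ^ 2)
        + (b / 2) * (N - 2 + α) * r ^ (α - 2) / (1 + r ^ α)
        + (b * α / 2) * (b / (2 * α) - 1) * (r ^ (α - 1) / (1 + r ^ α)) ^ 2)
    (x : EuclideanSpace ℝ (Fin N)) (hx : x ≠ 0) (hwx : w ‖x‖ ≠ 0) :
    laplacian g x + b * (‖x‖ ^ (α - 1) / (1 + ‖x‖ ^ α)) *
        (inner ℝ ((‖x‖)⁻¹ • x) (gradient g x) : ℝ) =
      (deriv (deriv w) ‖x‖ / w ‖x‖ - m ‖x‖) * g x := by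
  have hr : (0:ℝ) < ‖x‖ := norm_pos_iff.mpr hx
  set r : ℝ := ‖x‖ with hrdef
  set dG : ℝ → ℝ := deriv G with hdGdef
  set ddG : ℝ → ℝ := deriv dG with hddGdef
  -- derivatives of G on Ioi 0
  have hGd : ∀ t ∈ Set.Ioi (0:ℝ), HasDerivAt G (dG t) t := by
    intro t ht
    exact ((hG.contDiffAt (isOpen_Ioi.mem_nhds ht)).differentiableAt
      (by norm_num)).hasDerivAt
  have hG1 : ContDiffOn ℝ 1 dG (Set.Ioi 0) :=
    hG.deriv_of_isOpen isOpen_Ioi (by norm_num)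
  have hGdd : ∀ t ∈ Set.Ioi (0:ℝ), HasDerivAt dG (ddG t) t := by
    intro t ht
    exact ((hG1.contDiffAt (isOpen_Ioi.mem_nhds ht)).differentiableAt
      (by norm_num)).hasDerivAt
  -- first derivative of g
  have hfd : ∀ y : EuclideanSpace ℝ (Fin N), y ≠ 0 →
      HasFDerivAt g ((dG ‖y‖ / ‖y‖) • innerSL ℝ y) y := fun y hy =>
    radial_fderiv G dG g hg y hy (hGd ‖y‖ (norm_pos_iff.mpr hy))
  -- auxiliary real function
  set ψ : ℝ → ℝ := fun s => dG (Real.sqrt s) / Real.sqrt s with hψdef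
  have hψval : ψ (r^2) = dG r / r := by
    simp only [hψdef, Real.sqrt_sq hr.le]
  have hfe : ∀ i : Fin N, (fun y => fderiv ℝ g y (EuclideanSpace.single i 1))
      =ᶠ[nhds x] fun y => ψ (‖y‖^2) * y i := by
    intro i
    filter_upwards [IsOpen.mem_nhds isOpen_compl_singleton
      (by simpa using hx : x ∈ ({0}ᶜ : Set (EuclideanSpace ℝ (Fin N))))] with y hy
    have hy0 : y ≠ 0 := hy
    rw [(hfd y hy0).fderiv]
    simp only [ContinuousLinearMap.smul_apply, innerSL_apply_apply, smul_eq_mul, hψdef,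
      Real.sqrt_sq (norm_nonneg y)]
    rw [EuclideanSpace.inner_single_right]
    simp
  -- derivative of ψ at r^2
  have h2x : HasDerivAt Real.sqrt (1/(2*r)) (r^2) := by
    have := Real.hasDerivAt_sqrt (x := r^2) (by positivity)
    rwa [Real.sqrt_sq hr.le] at this
  set dψ : ℝ := (ddG r * (1/(2*r)) * r - dG r * (1/(2*r))) / r^2 with hdψdef
  have hψ : HasDerivAt ψ dψ (r^2) := by
    have hnum : HasDerivAt (fun s => dG (Real.sqrt s)) (ddG r * (1/(2*r))) (r^2) := by
      have := HasDerivAt.comp (r^2)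
        (by rw [Real.sqrt_sq hr.le]; exact hGdd r hr) h2x
      exact this
    have h := hnum.div h2x (by rw [Real.sqrt_sq hr.le]; exact hr.ne')
    rw [Real.sqrt_sq hr.le] at h
    exact h
  -- second directional derivatives
  have hnsq : HasFDerivAt (fun z : EuclideanSpace ℝ (Fin N) => ‖z‖^2) (2 • innerSL ℝ x) x :=
    (hasStrictFDerivAt_norm_sq x).hasFDerivAt
  have hsec : ∀ i : Fin N, fderiv ℝ (fun y => fderiv ℝ g y (EuclideanSpace.single i 1)) x
      (EuclideanSpace.single i 1) = ψ (r^2) + x i * (dψ * (2 * x i)) := by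
    intro i
    rw [(hfe i).fderiv_eq]
    have hc : HasFDerivAt (fun y : EuclideanSpace ℝ (Fin N) => ψ (‖y‖^2))
        (dψ • (2 • innerSL ℝ x)) x := by have := hψ.comp_hasFDerivAt x hnsq; exact this
    have hd : HasFDerivAt (fun y : EuclideanSpace ℝ (Fin N) => y i)
        ((EuclideanSpace.proj i : EuclideanSpace ℝ (Fin N) →L[ℝ] ℝ)) x :=
      (EuclideanSpace.proj i : EuclideanSpace ℝ (Fin N) →L[ℝ] ℝ).hasFDerivAt
    rw [(hc.fun_mul hd).fderiv]
    simp only [ContinuousLinearMap.add_apply, ContinuousLinearMap.smul_apply,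
      PiLp.proj_apply, innerSL_apply_apply, smul_eq_mul]
    rw [EuclideanSpace.inner_single_right]
    simp [EuclideanSpace.single_apply, ← hrdef]
  -- Laplacian value
  have hxsum : ∑ i, x i ^ 2 = r ^ 2 := sum_coord_sq x
  have hlap : laplacian g x = ddG r + ((N:ℝ)-1)/r * dG r := by
    rw [laplacian, Finset.sum_congr rfl fun i _ => hsec i]
    rw [Finset.sum_add_distrib, Finset.sum_const, Finset.card_univ, Fintype.card_fin]
    have h1 : ∀ i : Fin N, x i * (dψ * (2 * x i)) = (2*dψ) * x i ^ 2 := by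
      intro i; ring
    rw [Finset.sum_congr rfl fun i _ => h1 i, ← Finset.mul_sum, hxsum, hψval, hdψdef]
    field_simp
    rw [nsmul_eq_mul, show r * ((N:ℝ) * (dG r / r)) = N * dG r by field_simp]
    ring
  -- gradient value
  have hgrad : gradient g x = (dG r / r) • x := by
    have htd : (InnerProductSpace.toDual ℝ (EuclideanSpace ℝ (Fin N))) ((dG r / r) • x)
        = (dG r / r) • innerSL ℝ x := by
      simp only [map_smul]
      ext v
      simp [InnerProductSpace.toDual_apply_apply]
    have : HasGradientAt g ((dG r / r) • x) x := by
      rw [hasGradientAt_iff_hasFDerivAt, htd]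
      exact hfd x hx
    exact this.gradient
  have hinner : (inner ℝ ((r)⁻¹ • x) (gradient g x) : ℝ) = dG r := by
    rw [hgrad, real_inner_smul_left, real_inner_smul_right, real_inner_self_eq_norm_sq,
      ← hrdef, sq]
    field_simp
    try simp
  -- derivative of w
  have h1A : ∀ t : ℝ, 0 < t → (0:ℝ) < 1 + t ^ α := by
    intro t ht; positivity
  set c1 : ℝ := ((N:ℝ) - 1)/2 with hc1def
  set c2 : ℝ := b/(2*α) with hc2def
  set W1 : ℝ → ℝ := fun t =>
    (c1 * t^(c1-1) * (1+t^α)^c2 + t^c1 * (α * t^(α-1) * c2 * (1+t^α)^(c2-1))) * G t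
      + t^c1 * (1+t^α)^c2 * dG t with hW1def
  have hwd : ∀ t ∈ Set.Ioi (0:ℝ), HasDerivAt w (W1 t) t := by
    intro t ht
    have hw_eq : w = fun t => t ^ ((N - 1 : ℝ) / 2) * (1 + t ^ α) ^ (b / (2 * α)) * G t :=
      funext hw
    rw [hw_eq]
    have hP : HasDerivAt (fun t : ℝ => t ^ c1) (c1 * t^(c1-1)) t :=
      Real.hasDerivAt_rpow_const (Or.inl (ne_of_gt ht))
    have hA : HasDerivAt (fun t : ℝ => 1 + t ^ α) (α * t^(α-1)) t :=
      (Real.hasDerivAt_rpow_const (Or.inl (ne_of_gt ht))).const_add 1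
    have hQ : HasDerivAt (fun t : ℝ => (1 + t ^ α) ^ c2)
        (α * t^(α-1) * c2 * (1+t^α)^(c2-1)) t :=
      hA.rpow_const (Or.inl (h1A t ht).ne')
    exact (hP.mul hQ).mul (hGd t ht)
  have hd1 : deriv w =ᶠ[nhds r] W1 := by
    filter_upwards [isOpen_Ioi.mem_nhds hr] with t ht using (hwd t ht).deriv
  -- second derivative of w at r
  have hP : HasDerivAt (fun t : ℝ => t ^ c1) (c1 * r^(c1-1)) r :=
    Real.hasDerivAt_rpow_const (Or.inl hr.ne')
  have hP1 : HasDerivAt (fun t : ℝ => t ^ (c1-1)) ((c1-1) * r^(c1-1-1)) r :=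
    Real.hasDerivAt_rpow_const (Or.inl hr.ne')
  have hPa : HasDerivAt (fun t : ℝ => t ^ (α-1)) ((α-1) * r^(α-1-1)) r :=
    Real.hasDerivAt_rpow_const (Or.inl hr.ne')
  have hA : HasDerivAt (fun t : ℝ => 1 + t ^ α) (α * r^(α-1)) r :=
    (Real.hasDerivAt_rpow_const (Or.inl hr.ne')).const_add 1
  have hQ : HasDerivAt (fun t : ℝ => (1 + t ^ α) ^ c2)
      (α * r^(α-1) * c2 * (1+r^α)^(c2-1)) r :=
    hA.rpow_const (Or.inl (h1A r hr).ne')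
  have hQ1 : HasDerivAt (fun t : ℝ => (1 + t ^ α) ^ (c2-1))
      (α * r^(α-1) * (c2-1) * (1+r^α)^(c2-1-1)) r :=
    hA.rpow_const (Or.inl (h1A r hr).ne')
  have hinnerD := ((hPa.const_mul α).mul_const c2).fun_mul hQ1
  have hF1 := ((hP1.const_mul c1).fun_mul hQ).fun_add (hP.fun_mul hinnerD)
  have hW2 := (hF1.fun_mul (hGd r hr)).fun_add ((hP.fun_mul hQ).fun_mul (hGdd r hr))
  have hdd := (Filter.EventuallyEq.deriv_eq hd1).trans (HasDerivAt.deriv hW2)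
  -- final algebra
  rw [hlap, hinner, hg x, ← hrdef, hw r, hm r, hdd]
  have hrs : ∀ y : ℝ, r ^ (y - 1) = r ^ y / r := fun y => by
    rw [Real.rpow_sub hr, Real.rpow_one]
  have hqs : ∀ y : ℝ, (1 + r^α) ^ (y - 1) = (1 + r^α) ^ y / (1 + r^α) := fun y => by
    rw [Real.rpow_sub (h1A r hr), Real.rpow_one]
  have hr2 : r ^ (α - 2) = r ^ α / r ^ 2 := by
    rw [show α - 2 = α - 1 - 1 by ring, hrs, hrs, div_div, ← sq]
  rw [hr2]
  simp only [hrs, hqs]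
  have hrne : r ≠ 0 := hr.ne'
  have hAne : 1 + r ^ α ≠ 0 := (h1A r hr).ne'
  have hPne : r ^ c1 ≠ 0 := (Real.rpow_pos_of_pos hr c1).ne'
  have hQne : (1 + r ^ α) ^ c2 ≠ 0 := (Real.rpow_pos_of_pos (h1A r hr) c2).ne'
  have hGne : G r ≠ 0 := (hGpos r hr).ne'
  have hαne : α ≠ 0 := by positivity
  set A : ℝ := r ^ α with hAdef
  set P : ℝ := r ^ c1 with hPdefv
  set Q : ℝ := (1 + A) ^ c2 with hQdefv
  clear_value A P Q
  simp only [hc1def, hc2def] at *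
  field_simp
  ring
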